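/- In the *-ring R = M₂(ℤ₂) of 2×2 matrices over ℤ₂ with transpose as involution, the graph Γ'(R) is connected with diameter 2 and girth 3. -/

import Mathlib

open Matrix

/-- The nonzero zero-divisors of `M₂(ℤ₂)`. -/
def ZstarM2 : Set (Matrix (Fin 2) (Fin 2) (ZMod 2)) :=
  {X | X ≠ 0 ∧ ∃ Y : Matrix (Fin 2) (Fin 2) (ZMod 2), Y ≠ 0 ∧ (X * Y = 0 ∨ Y * X = 0)}

/-- The generalized zero-divisor graph Γ'(M₂(ℤ₂)), with transpose as involution. -/
def gammaPM2 : SimpleGraph ZstarM2 where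
  Adj X Y := X ≠ Y ∧ ∃ n : ℕ, 0 < n ∧
      ((X : Matrix (Fin 2) (Fin 2) (ZMod 2)) ^ n * (Y : Matrix (Fin 2) (Fin 2) (ZMod 2))ᵀ = 0 ∨
       (Y : Matrix (Fin 2) (Fin 2) (ZMod 2)) ^ n * (X : Matrix (Fin 2) (Fin 2) (ZMod 2))ᵀ = 0)
  symm := by
    constructor
    rintro X Y ⟨hne, n, hn, h⟩
    exact ⟨hne.symm, n, hn, h.symm⟩
  loopless := by constructor; rintro X ⟨hne, -⟩; exact hne rfl

namespace GammaAux

abbrev M2 := Matrix (Fin 2) (Fin 2) (ZMod 2)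

def vN : ZstarM2 := ⟨!![0,1;0,0], by simp only [ZstarM2, Set.mem_setOf_eq]; decide⟩
def vN' : ZstarM2 := ⟨!![0,0;1,0], by simp only [ZstarM2, Set.mem_setOf_eq]; decide⟩
def vE : ZstarM2 := ⟨!![1,0;0,0], by simp only [ZstarM2, Set.mem_setOf_eq]; decide⟩
def vY : ZstarM2 := ⟨!![1,1;0,0], by simp only [ZstarM2, Set.mem_setOf_eq]; decide⟩

lemma adj_of_sq_zero {u v : ZstarM2} (hne : u ≠ v)
    (h : (u : M2) ^ 2 = 0) : gammaPM2.Adj u v :=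
  ⟨hne, 2, by norm_num, Or.inl (by rw [h, zero_mul])⟩

lemma hN2 : (vN : M2) ^ 2 = 0 := by decide
lemma hN'2 : (vN' : M2) ^ 2 = 0 := by decide

lemma hub_adj {u : ZstarM2} (h : vN ≠ u) : gammaPM2.Adj vN u :=
  adj_of_sq_zero h hN2

lemma reach_hub (u : ZstarM2) : gammaPM2.Reachable vN u := by
  by_cases h : vN = u
  · exact h ▸ SimpleGraph.Reachable.refl _
  · exact (hub_adj h).reachable

lemma preconn : gammaPM2.Preconnected := fun u v =>
  (reach_hub u).symm.trans (reach_hub v)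

lemma conn : gammaPM2.Connected := by
  rw [SimpleGraph.connected_iff]; exact ⟨preconn, ⟨vN⟩⟩

lemma ediam_le : gammaPM2.ediam ≤ 2 := by
  apply SimpleGraph.ediam_le_of_edist_le
  intro u v
  by_cases huv : u = v
  · subst huv; simp [SimpleGraph.edist_self]
  by_cases hu : vN = u
  · subst hu
    calc gammaPM2.edist vN v ≤ ((hub_adj huv).toWalk).length :=
          SimpleGraph.edist_le _
      _ ≤ 2 := by simp
  by_cases hv : vN = v
  · subst hv
    calc gammaPM2.edist u vN ≤ ((hub_adj hu).symm.toWalk).length :=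
          SimpleGraph.edist_le _
      _ ≤ 2 := by simp
  · calc gammaPM2.edist u v
        ≤ (SimpleGraph.Walk.cons (hub_adj hu).symm (hub_adj hv).toWalk).length :=
          SimpleGraph.edist_le _
      _ ≤ 2 := by simp

lemma vE_ne_vY : vE ≠ vY := by
  intro h
  have : (vE : M2) = vY := congrArg _ h
  revert this; decide

lemma not_adj_EY : ¬ gammaPM2.Adj vE vY := by
  rintro ⟨-, n, hn, h⟩
  obtain ⟨m, rfl⟩ : ∃ m, n = m + 1 := ⟨n - 1, (Nat.succ_pred_eq_of_pos hn).symm⟩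
  have hE : (vE : M2) ^ (m + 1) = vE := IsIdempotentElem.pow_succ_eq m (show _ * _ = _ by decide)
  have hY : (vY : M2) ^ (m + 1) = vY := IsIdempotentElem.pow_succ_eq m (show _ * _ = _ by decide)
  rw [hE, hY] at h
  revert h; decide

lemma two_le_edist : 2 ≤ gammaPM2.edist vE vY := by
  have h0 : gammaPM2.edist vE vY ≠ 0 :=
    fun h => vE_ne_vY (SimpleGraph.edist_eq_zero_iff.mp h)
  have h1 : gammaPM2.edist vE vY ≠ 1 :=
    fun h => not_adj_EY (SimpleGraph.edist_eq_one_iff_adj.mp h)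
  have : (1 : ℕ∞) < gammaPM2.edist vE vY :=
    lt_of_le_of_ne (ENat.one_le_iff_ne_zero.mpr h0) (Ne.symm h1)
  exact Order.add_one_le_of_lt this

lemma ediam_eq : gammaPM2.ediam = 2 :=
  le_antisymm ediam_le (le_trans two_le_edist SimpleGraph.edist_le_ediam)

lemma hNN' : gammaPM2.Adj vN vN' := adj_of_sq_zero (by intro h; exact absurd (congrArg Subtype.val h) (by decide)) hN2
lemma hN'E : gammaPM2.Adj vN' vE := adj_of_sq_zero (by intro h; exact absurd (congrArg Subtype.val h) (by decide)) hN'2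
lemma hEN : gammaPM2.Adj vE vN := (hub_adj (by intro h; exact absurd (congrArg Subtype.val h) (by decide))).symm

def triangle : gammaPM2.Walk vN vN :=
  SimpleGraph.Walk.cons hNN' (SimpleGraph.Walk.cons hN'E (SimpleGraph.Walk.cons hEN SimpleGraph.Walk.nil))

lemma triangle_isCycle : triangle.IsCycle := by
  unfold triangle
  rw [SimpleGraph.Walk.cons_isCycle_iff]
  have h1 : vN ≠ vN' := fun h => absurd (congrArg Subtype.val h) (by decide)
  have h2 : vN ≠ vE := fun h => absurd (congrArg Subtype.val h) (by decide)
  have h3 : vN' ≠ vE := fun h => absurd (congrArg Subtype.val h) (by decide)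
  simp [SimpleGraph.Walk.cons_isPath_iff]
  tauto

end GammaAux

/-- Γ'(M₂(ℤ₂)) is connected, has diameter 2 and girth 3. -/
theorem stmt_8 :
    gammaPM2.Connected ∧ gammaPM2.ediam = 2 ∧ gammaPM2.egirth = 3 := by
  refine ⟨GammaAux.conn, GammaAux.ediam_eq, le_antisymm ?_ SimpleGraph.three_le_egirth⟩
  calc gammaPM2.egirth ≤ (GammaAux.triangle.length : ℕ∞) := by
        rw [SimpleGraph.egirth]
        exact iInf_le_of_le GammaAux.vN (iInf_le_of_le GammaAux.triangle
          (iInf_le_of_le GammaAux.triangle_isCycle le_rfl))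
    _ ≤ 3 := by simp [GammaAux.triangle]
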